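/- For every n ≥ 3, every k with 1 ≤ k < n/2, and every integer i with 1 ≤ i ≤ k, let A = {x_1, ..., x_{n-k}, y_1, ..., y_i} and B = V(P(n,k)) \ A. Then [A, B] is a bond of P(n, k) of size n - k + i + 2. -/
import Mathlib


open SimpleGraph

/-- An edge-cut of `G`: a set of edges of `G` whose deletion disconnects `G`. -/
def IsEdgeCut {V : Type*} (G : SimpleGraph V) (S : Set (Sym2 V)) : Prop :=
  S ⊆ G.edgeSet ∧ ¬ (G.deleteEdges S).Connected

/-- A bond: a minimal nonempty edge-cut. -/
def IsBond {V : Type*} (G : SimpleGraph V) (S : Set (Sym2 V)) : Prop :=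
  S.Nonempty ∧ IsEdgeCut G S ∧ ∀ T ⊂ S, T.Nonempty → ¬ IsEdgeCut G T

/-- A largest bond: a bond of maximum size. -/
def IsLargestBond {V : Type*} (G : SimpleGraph V) (S : Set (Sym2 V)) : Prop :=
  IsBond G S ∧ ∀ T, IsBond G T → T.ncard ≤ S.ncard

/-- The set of edges of `G` between `X` and its complement. -/
def crossEdges {V : Type*} (G : SimpleGraph V) (X : Set V) : Set (Sym2 V) :=
  {e ∈ G.edgeSet | ∃ x ∈ X, ∃ y ∈ Xᶜ, e = s(x, y)}

/-- `G` is 2-connected: at least 3 vertices and connected after deleting any ≤ 1 vertices. -/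
def TwoConnected {V : Type*} (G : SimpleGraph V) : Prop :=
  3 ≤ Nat.card V ∧ ∀ s : Set V, s.ncard ≤ 1 → (G.induce sᶜ).Connected

/-- `G` is 3-connected: at least 4 vertices and connected after deleting any ≤ 2 vertices. -/
def ThreeConnected {V : Type*} (G : SimpleGraph V) : Prop :=
  4 ≤ Nat.card V ∧ ∀ s : Set V, s.ncard ≤ 2 → (G.induce sᶜ).Connected

/-- A longest cycle of `G`. -/
def IsLongestCycle {V : Type*} (G : SimpleGraph V) {v : V} (C : G.Walk v v) : Prop :=
  C.IsCycle ∧ ∀ (u : V) (D : G.Walk u u), D.IsCycle → D.length ≤ C.length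

/-- The generalized Petersen graph `P(n, k)`: outer vertices `Sum.inl i` ("xᵢ") and
inner vertices `Sum.inr i` ("yᵢ"), with edges `xᵢxᵢ₊₁`, `xᵢyᵢ`, `yᵢyᵢ₊ₖ` (indices mod n). -/
def GPetersen (n k : ℕ) : SimpleGraph (ZMod n ⊕ ZMod n) :=
  SimpleGraph.fromRel (fun a b =>
    (∃ i : ZMod n, a = Sum.inl i ∧ b = Sum.inl (i + 1)) ∨
    (∃ i : ZMod n, a = Sum.inl i ∧ b = Sum.inr i) ∨
    (∃ i : ZMod n, a = Sum.inr i ∧ b = Sum.inr (i + (k : ZMod n))))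

section General

variable {V : Type*} {G : SimpleGraph V} {A : Set V}

lemma cross_not_in {u v : V} (hu : u ∈ A) (hv : v ∈ A) : s(u, v) ∉ crossEdges G A := by
  rintro ⟨-, x, hx, y, hy, hxy⟩
  rcases Sym2.eq_iff.1 hxy with ⟨rfl, rfl⟩ | ⟨rfl, rfl⟩
  · exact hy hv
  · exact hy hu

lemma cross_not_in' {u v : V} (hu : u ∈ Aᶜ) (hv : v ∈ Aᶜ) : s(u, v) ∉ crossEdges G A := by
  rintro ⟨-, x, hx, y, hy, hxy⟩
  rcases Sym2.eq_iff.1 hxy with ⟨rfl, rfl⟩ | ⟨rfl, rfl⟩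
  · exact hu hx
  · exact hv hx

lemma adj_del_mem_iff {u v : V} (h : (G.deleteEdges (crossEdges G A)).Adj u v) :
    u ∈ A ↔ v ∈ A := by
  rw [deleteEdges_adj] at h
  obtain ⟨hadj, hne⟩ := h
  constructor
  · intro hu; by_contra hv
    exact hne ⟨(mem_edgeSet G).2 hadj, u, hu, v, hv, rfl⟩
  · intro hv; by_contra hu
    exact hne ⟨(mem_edgeSet G).2 hadj, v, hv, u, hu, Sym2.eq_swap.symm⟩

lemma reach_del_mem_iff {u v : V} (h : (G.deleteEdges (crossEdges G A)).Reachable u v) :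
    (u ∈ A ↔ v ∈ A) := by
  obtain ⟨w⟩ := h
  induction w with
  | nil => exact Iff.rfl
  | cons h p ih => exact (adj_del_mem_iff h).trans ih

lemma isBond_crossEdges (hA : (G.induce A).Connected) (hB : (G.induce Aᶜ).Connected)
    (hne : (crossEdges G A).Nonempty) : IsBond G (crossEdges G A) := by
  obtain ⟨e, he⟩ := hne
  obtain ⟨heE, x, hx, y, hy, rfl⟩ := he
  have hxyadj : G.Adj x y := (mem_edgeSet G).1 heE
  refine ⟨⟨_, heE, x, hx, y, hy, rfl⟩, ⟨fun f hf => hf.1, ?_⟩, ?_⟩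
  · intro hc
    exact hy ((reach_del_mem_iff (hc.preconnected x y)).1 hx)
  · rintro T hT hTne ⟨hTE, hnc⟩
    apply hnc
    obtain ⟨f, hfS, hfT⟩ := Set.exists_of_ssubset hT
    obtain ⟨hfE, a, ha, b, hb, rfl⟩ := hfS
    have hab : (G.deleteEdges T).Adj a b := by
      rw [deleteEdges_adj]
      exact ⟨(mem_edgeSet G).1 hfE, hfT⟩
    -- homs from the induced graphs
    have mapA : ∀ u v : A, (G.induce A).Reachable u v → (G.deleteEdges T).Reachable u v := by
      intro u v h
      exact h.map ⟨Subtype.val, fun {p q} hpq =>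
        deleteEdges_adj.2 ⟨hpq, fun hmem => cross_not_in p.2 q.2 (hT.1 hmem)⟩⟩
    have mapB : ∀ u v : (Aᶜ : Set V), (G.induce Aᶜ).Reachable u v →
        (G.deleteEdges T).Reachable u v := by
      intro u v h
      exact h.map ⟨Subtype.val, fun {p q} hpq =>
        deleteEdges_adj.2 ⟨hpq, fun hmem => cross_not_in' p.2 q.2 (hT.1 hmem)⟩⟩
    have key : ∀ u : V, (G.deleteEdges T).Reachable u a := by
      intro u
      by_cases hu : u ∈ A
      · exact mapA ⟨u, hu⟩ ⟨a, ha⟩ (hA.preconnected _ _)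
      · exact (mapB ⟨u, hu⟩ ⟨b, hb⟩ (hB.preconnected _ _)).trans hab.symm.reachable
    rw [connected_iff]
    exact ⟨fun u v => (key u).trans (key v).symm, ⟨a⟩⟩

end General



section Petersen
open Sum

def Aset (n k i : ℕ) : Set (ZMod n ⊕ ZMod n) :=
  (Sum.inl '' {v : ZMod n | ∃ j : ℕ, 1 ≤ j ∧ j ≤ n - k ∧ v = (j : ZMod n)}) ∪
  (Sum.inr '' {v : ZMod n | ∃ j : ℕ, 1 ≤ j ∧ j ≤ i ∧ v = (j : ZMod n)})

variable {n k i : ℕ}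

lemma cast_eq_cast_iff (a b : ℕ) : ((a : ZMod n) = (b : ZMod n)) ↔ a % n = b % n := by
  rw [ZMod.natCast_eq_natCast_iff]; rfl

lemma exists_nat_rep (hn : 3 ≤ n) (a : ZMod n) : ∃ m : ℕ, m < n ∧ (m : ZMod n) = a := by
  haveI : NeZero n := ⟨by omega⟩
  exact ⟨a.val, a.val_lt, ZMod.natCast_rightInverse a⟩

lemma mem_A_inl (hn : 3 ≤ n) (hk1 : 1 ≤ k) (a : ℕ) :
    Sum.inl (a : ZMod n) ∈ Aset n k i ↔ 1 ≤ a % n ∧ a % n ≤ n - k := by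
  constructor
  · rintro (⟨v, ⟨j, h1, h2, rfl⟩, hv⟩ | ⟨v, -, hv⟩)
    · have hj : (j : ZMod n) = (a : ZMod n) := Sum.inl.inj hv
      rw [cast_eq_cast_iff, Nat.mod_eq_of_lt (by omega)] at hj
      omega
    · exact absurd hv (by simp)
  · rintro ⟨h1, h2⟩
    exact Or.inl ⟨((a % n : ℕ) : ZMod n), ⟨a % n, h1, h2, rfl⟩, by rw [ZMod.natCast_mod]⟩

lemma mem_A_inr (hn : 3 ≤ n) (hk1 : 1 ≤ k) (hk2 : 2 * k < n) (hi2 : i ≤ k) (a : ℕ) :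
    Sum.inr (a : ZMod n) ∈ Aset n k i ↔ 1 ≤ a % n ∧ a % n ≤ i := by
  constructor
  · rintro (⟨v, -, hv⟩ | ⟨v, ⟨j, h1, h2, rfl⟩, hv⟩)
    · exact absurd hv (by simp)
    · have hj : (j : ZMod n) = (a : ZMod n) := Sum.inr.inj hv
      rw [cast_eq_cast_iff, Nat.mod_eq_of_lt (by omega)] at hj
      omega
  · rintro ⟨h1, h2⟩
    exact Or.inr ⟨((a % n : ℕ) : ZMod n), ⟨a % n, h1, h2, rfl⟩, by rw [ZMod.natCast_mod]⟩

lemma adj_outer (hn : 3 ≤ n) (a : ZMod n) :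
    (GPetersen n k).Adj (Sum.inl a) (Sum.inl (a + 1)) := by
  haveI : Fact (1 < n) := ⟨by omega⟩
  refine (fromRel_adj _ _ _).2 ⟨?_, Or.inl (Or.inl ⟨a, rfl, rfl⟩)⟩
  intro h
  have h1 : a = a + 1 := Sum.inl.inj h
  have : (1 : ZMod n) = 0 := by
    have := (left_eq_add.1 h1)
    exact this
  exact one_ne_zero this

lemma adj_spoke (a : ZMod n) : (GPetersen n k).Adj (Sum.inl a) (Sum.inr a) := by
  refine (fromRel_adj _ _ _).2 ⟨by simp, Or.inl (Or.inr (Or.inl ⟨a, rfl, rfl⟩))⟩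

lemma k_cast_ne_zero (hn : 3 ≤ n) (hk1 : 1 ≤ k) (hk2 : 2 * k < n) : (k : ZMod n) ≠ 0 := by
  have : ((k : ℕ) : ZMod n) = ((0 : ℕ) : ZMod n) → False := by
    rw [cast_eq_cast_iff, Nat.mod_eq_of_lt (by omega), Nat.zero_mod]
    omega
  simpa using this

lemma adj_inner (hn : 3 ≤ n) (hk1 : 1 ≤ k) (hk2 : 2 * k < n) (a : ZMod n) :
    (GPetersen n k).Adj (Sum.inr a) (Sum.inr (a + (k : ZMod n))) := by
  refine (fromRel_adj _ _ _).2 ⟨?_, Or.inl (Or.inr (Or.inr ⟨a, rfl, rfl⟩))⟩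
  intro h
  have h1 : a = a + (k : ZMod n) := Sum.inr.inj h
  exact k_cast_ne_zero hn hk1 hk2 (left_eq_add.1 h1)

lemma adj_cases {u v : ZMod n ⊕ ZMod n} (h : (GPetersen n k).Adj u v) :
    (∃ a, (u = Sum.inl a ∧ v = Sum.inl (a + 1)) ∨ (v = Sum.inl a ∧ u = Sum.inl (a + 1))) ∨
    (∃ a, (u = Sum.inl a ∧ v = Sum.inr a) ∨ (v = Sum.inl a ∧ u = Sum.inr a)) ∨
    (∃ a, (u = Sum.inr a ∧ v = Sum.inr (a + (k : ZMod n))) ∨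
      (v = Sum.inr a ∧ u = Sum.inr (a + (k : ZMod n)))) := by
  rw [GPetersen, fromRel_adj] at h
  obtain ⟨-, h | h⟩ := h <;>
    rcases h with ⟨a, h1, h2⟩ | ⟨a, h1, h2⟩ | ⟨a, h1, h2⟩
  · exact Or.inl ⟨a, Or.inl ⟨h1, h2⟩⟩
  · exact Or.inr (Or.inl ⟨a, Or.inl ⟨h1, h2⟩⟩)
  · exact Or.inr (Or.inr ⟨a, Or.inl ⟨h1, h2⟩⟩)
  · exact Or.inl ⟨a, Or.inr ⟨h1, h2⟩⟩
  · exact Or.inr (Or.inl ⟨a, Or.inr ⟨h1, h2⟩⟩)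
  · exact Or.inr (Or.inr ⟨a, Or.inr ⟨h1, h2⟩⟩)

end Petersen

section Petersen2
open Sum
variable {n k i : ℕ}

def Fset (n k i : ℕ) : Finset (Sym2 (ZMod n ⊕ ZMod n)) :=
  ({s(Sum.inl ((n - k : ℕ) : ZMod n), Sum.inl ((n - k + 1 : ℕ) : ZMod n)),
    s(Sum.inl ((0 : ℕ) : ZMod n), Sum.inl ((1 : ℕ) : ZMod n))} :
      Finset (Sym2 (ZMod n ⊕ ZMod n))) ∪
  (Finset.Icc (i + 1) (n - k)).image
    (fun j => s(Sum.inl ((j : ℕ) : ZMod n), Sum.inr ((j : ℕ) : ZMod n))) ∪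
  (Finset.Icc 1 i).image
    (fun m => s(Sum.inr ((m : ℕ) : ZMod n), Sum.inr ((m + k : ℕ) : ZMod n))) ∪
  (Finset.Icc 1 i).image
    (fun m => s(Sum.inr ((n - k + m : ℕ) : ZMod n), Sum.inr ((m : ℕ) : ZMod n)))

lemma mem_F (e : Sym2 (ZMod n ⊕ ZMod n)) : e ∈ Fset n k i ↔
    e = s(Sum.inl ((n - k : ℕ) : ZMod n), Sum.inl ((n - k + 1 : ℕ) : ZMod n)) ∨
    e = s(Sum.inl ((0 : ℕ) : ZMod n), Sum.inl ((1 : ℕ) : ZMod n)) ∨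
    (∃ j : ℕ, (i + 1 ≤ j ∧ j ≤ n - k) ∧
      e = s(Sum.inl ((j : ℕ) : ZMod n), Sum.inr ((j : ℕ) : ZMod n))) ∨
    (∃ m : ℕ, (1 ≤ m ∧ m ≤ i) ∧
      e = s(Sum.inr ((m : ℕ) : ZMod n), Sum.inr ((m + k : ℕ) : ZMod n))) ∨
    (∃ m : ℕ, (1 ≤ m ∧ m ≤ i) ∧
      e = s(Sum.inr ((n - k + m : ℕ) : ZMod n), Sum.inr ((m : ℕ) : ZMod n))) := by
  simp only [Fset, Finset.mem_union, Finset.mem_insert, Finset.mem_singleton,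
    Finset.mem_image, Finset.mem_Icc, or_assoc]
  constructor
  · rintro (h | h | ⟨j, hj, h⟩ | ⟨m, hm, h⟩ | ⟨m, hm, h⟩)
    · exact Or.inl h
    · exact Or.inr (Or.inl h)
    · exact Or.inr (Or.inr (Or.inl ⟨j, hj, h.symm⟩))
    · exact Or.inr (Or.inr (Or.inr (Or.inl ⟨m, hm, h.symm⟩)))
    · exact Or.inr (Or.inr (Or.inr (Or.inr ⟨m, hm, h.symm⟩)))
  · rintro (h | h | ⟨j, hj, h⟩ | ⟨m, hm, h⟩ | ⟨m, hm, h⟩)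
    · exact Or.inl h
    · exact Or.inr (Or.inl h)
    · exact Or.inr (Or.inr (Or.inl ⟨j, hj, h.symm⟩))
    · exact Or.inr (Or.inr (Or.inr (Or.inl ⟨m, hm, h.symm⟩)))
    · exact Or.inr (Or.inr (Or.inr (Or.inr ⟨m, hm, h.symm⟩)))

end Petersen2

section Petersen3
open Sum
variable {n k i : ℕ}

lemma cross_eq (hn : 3 ≤ n) (hk1 : 1 ≤ k) (hk2 : 2 * k < n) (hi1 : 1 ≤ i) (hi2 : i ≤ k) :
    crossEdges (GPetersen n k) (Aset n k i) = ↑(Fset n k i) := by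
  ext e
  rw [Finset.mem_coe, mem_F]
  constructor
  · rintro ⟨heE, x, hx, y, hy, rfl⟩
    rw [Set.mem_compl_iff] at hy
    have hadj : (GPetersen n k).Adj x y := (GPetersen n k).mem_edgeSet.1 heE
    rcases adj_cases hadj with ⟨a, hc⟩ | ⟨a, hc⟩ | ⟨a, hc⟩ <;>
      obtain ⟨m, hm, rfl⟩ := exists_nat_rep hn a
    -- outer edges
    · have hcast : (Sum.inl (((m : ℕ) : ZMod n) + 1) : ZMod n ⊕ ZMod n)
          = Sum.inl (((m + 1 : ℕ) : ZMod n)) := by push_cast; rfl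
      rcases hc with ⟨rfl, rfl⟩ | ⟨rfl, rfl⟩
      · rw [hcast] at hy ⊢
        rw [mem_A_inl hn hk1] at hx hy
        rw [Nat.mod_eq_of_lt hm] at hx
        have hm' : m = n - k := by
          rcases Nat.lt_or_ge (m + 1) n with h | h
          · rw [Nat.mod_eq_of_lt h] at hy; omega
          · rw [show m + 1 = n by omega, Nat.mod_self] at hy; omega
        subst hm'
        exact Or.inl rfl
      · rw [hcast] at hx ⊢
        rw [mem_A_inl hn hk1] at hx hy
        rw [Nat.mod_eq_of_lt hm] at hy
        have h0 : m = 0 := by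
          rcases Nat.lt_or_ge (m + 1) n with h | h
          · rw [Nat.mod_eq_of_lt h] at hx; omega
          · rw [show m + 1 = n by omega, Nat.mod_self] at hx; omega
        subst h0
        refine Or.inr (Or.inl ?_)
        norm_num
    -- spokes
    · rcases hc with ⟨rfl, rfl⟩ | ⟨rfl, rfl⟩
      · rw [mem_A_inl hn hk1] at hx
        rw [mem_A_inr hn hk1 hk2 hi2] at hy
        rw [Nat.mod_eq_of_lt hm] at hx hy
        exact Or.inr (Or.inr (Or.inl ⟨m, ⟨by omega, by omega⟩, rfl⟩))
      · rw [mem_A_inr hn hk1 hk2 hi2] at hx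
        rw [mem_A_inl hn hk1] at hy
        rw [Nat.mod_eq_of_lt hm] at hx hy
        exact (hy ⟨hx.1, by omega⟩).elim
    -- inner edges
    · have hcast : (Sum.inr (((m : ℕ) : ZMod n) + ((k : ℕ) : ZMod n)) : ZMod n ⊕ ZMod n)
          = Sum.inr (((m + k : ℕ) : ZMod n)) := by push_cast; rfl
      rcases hc with ⟨rfl, rfl⟩ | ⟨rfl, rfl⟩
      · rw [hcast] at hy ⊢
        rw [mem_A_inr hn hk1 hk2 hi2] at hx
        rw [Nat.mod_eq_of_lt hm] at hx
        exact Or.inr (Or.inr (Or.inr (Or.inl ⟨m, ⟨hx.1, hx.2⟩, rfl⟩)))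
      · rw [hcast] at hx ⊢
        rw [mem_A_inr hn hk1 hk2 hi2] at hx hy
        rw [Nat.mod_eq_of_lt hm] at hy
        refine Or.inr (Or.inr (Or.inr (Or.inr ?_)))
        rcases Nat.lt_or_ge (m + k) n with h | h
        · rw [Nat.mod_eq_of_lt h] at hx
          have hm0 : m = 0 := by omega
          have hik : i = k := by omega
          subst hm0
          refine ⟨i, ⟨hi1, le_refl i⟩, ?_⟩
          have e1 : ((n - k + i : ℕ) : ZMod n) = ((0 : ℕ) : ZMod n) := by
            rw [cast_eq_cast_iff, show n - k + i = n by omega, Nat.mod_self, Nat.zero_mod]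
          have e2 : ((0 + k : ℕ) : ZMod n) = ((i : ℕ) : ZMod n) := by
            rw [show 0 + k = k from by omega, cast_eq_cast_iff, hik]
          rw [e1, e2]
          exact Sym2.eq_swap
        · have hx' : (m + k) % n = m + k - n := by
            rw [Nat.mod_eq_sub_mod h, Nat.mod_eq_of_lt (by omega)]
          rw [hx'] at hx
          refine ⟨m + k - n, ⟨by omega, by omega⟩, ?_⟩
          have e1 : ((n - k + (m + k - n) : ℕ) : ZMod n) = ((m : ℕ) : ZMod n) := by
            rw [show n - k + (m + k - n) = m by omega]
          have e2 : ((m + k - n : ℕ) : ZMod n) = ((m + k : ℕ) : ZMod n) := by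
            rw [cast_eq_cast_iff, ← Nat.mod_eq_sub_mod h]
          rw [e1, e2]
          exact Sym2.eq_swap
  · rintro (rfl | rfl | ⟨j, ⟨hj1, hj2⟩, rfl⟩ | ⟨m, ⟨hm1, hm2⟩, rfl⟩ | ⟨m, ⟨hm1, hm2⟩, rfl⟩)
    · refine ⟨?_, Sum.inl ((n - k : ℕ) : ZMod n), ?_, Sum.inl ((n - k + 1 : ℕ) : ZMod n), ?_, rfl⟩
      · rw [mem_edgeSet]
        have hc : ((n - k : ℕ) : ZMod n) + 1 = ((n - k + 1 : ℕ) : ZMod n) := by push_cast; ring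
        have := adj_outer (k := k) hn ((n - k : ℕ) : ZMod n)
        rwa [hc] at this
      · rw [mem_A_inl hn hk1, Nat.mod_eq_of_lt (by omega)]; omega
      · rw [Set.mem_compl_iff, mem_A_inl hn hk1]
        rcases Nat.lt_or_ge (n - k + 1) n with h | h
        · rw [Nat.mod_eq_of_lt h]; omega
        · rw [show n - k + 1 = n by omega, Nat.mod_self]; omega
    · refine ⟨?_, Sum.inl ((1 : ℕ) : ZMod n), ?_, Sum.inl ((0 : ℕ) : ZMod n), ?_, Sym2.eq_swap⟩
      · rw [mem_edgeSet]
        have hc : ((0 : ℕ) : ZMod n) + 1 = ((1 : ℕ) : ZMod n) := by push_cast; ring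
        have := adj_outer (k := k) hn ((0 : ℕ) : ZMod n)
        rwa [hc] at this
      · rw [mem_A_inl hn hk1, Nat.mod_eq_of_lt (by omega)]; omega
      · rw [Set.mem_compl_iff, mem_A_inl hn hk1, Nat.mod_eq_of_lt (by omega)]; omega
    · refine ⟨?_, Sum.inl ((j : ℕ) : ZMod n), ?_, Sum.inr ((j : ℕ) : ZMod n), ?_, rfl⟩
      · rw [mem_edgeSet]; exact adj_spoke _
      · rw [mem_A_inl hn hk1, Nat.mod_eq_of_lt (by omega)]; omega
      · rw [Set.mem_compl_iff, mem_A_inr hn hk1 hk2 hi2, Nat.mod_eq_of_lt (by omega)]; omega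
    · refine ⟨?_, Sum.inr ((m : ℕ) : ZMod n), ?_, Sum.inr ((m + k : ℕ) : ZMod n), ?_, rfl⟩
      · rw [mem_edgeSet]
        have hc : ((m : ℕ) : ZMod n) + ((k : ℕ) : ZMod n) = ((m + k : ℕ) : ZMod n) := by
          push_cast; ring
        have := adj_inner hn hk1 hk2 ((m : ℕ) : ZMod n)
        rwa [hc] at this
      · rw [mem_A_inr hn hk1 hk2 hi2, Nat.mod_eq_of_lt (by omega)]; omega
      · rw [Set.mem_compl_iff, mem_A_inr hn hk1 hk2 hi2, Nat.mod_eq_of_lt (by omega)]; omega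
    · refine ⟨?_, Sum.inr ((m : ℕ) : ZMod n), ?_, Sum.inr ((n - k + m : ℕ) : ZMod n), ?_,
        Sym2.eq_swap⟩
      · rw [mem_edgeSet]
        have hc : ((n - k + m : ℕ) : ZMod n) + ((k : ℕ) : ZMod n) = ((m : ℕ) : ZMod n) := by
          rw [← Nat.cast_add, cast_eq_cast_iff, show n - k + m + k = n + m by omega,
            Nat.add_mod_left]
        have := adj_inner hn hk1 hk2 ((n - k + m : ℕ) : ZMod n)
        rwa [hc] at this
      · rw [mem_A_inr hn hk1 hk2 hi2, Nat.mod_eq_of_lt (by omega)]; omega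
      · rw [Set.mem_compl_iff, mem_A_inr hn hk1 hk2 hi2]
        rcases Nat.lt_or_ge (n - k + m) n with h | h
        · rw [Nat.mod_eq_of_lt h]; omega
        · rw [show n - k + m = n by omega, Nat.mod_self]; omega

end Petersen3

section Petersen4
open Sum
variable {n k i : ℕ}

lemma card_F (hn : 3 ≤ n) (hk1 : 1 ≤ k) (hk2 : 2 * k < n) (hi1 : 1 ≤ i) (hi2 : i ≤ k) :
    (Fset n k i).card = n - k + i + 2 := by
  classical
  set e1 : Sym2 (ZMod n ⊕ ZMod n) :=
    s(Sum.inl ((n - k : ℕ) : ZMod n), Sum.inl ((n - k + 1 : ℕ) : ZMod n)) with he1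
  set e2 : Sym2 (ZMod n ⊕ ZMod n) :=
    s(Sum.inl ((0 : ℕ) : ZMod n), Sum.inl ((1 : ℕ) : ZMod n)) with he2
  set f2 : ℕ → Sym2 (ZMod n ⊕ ZMod n) :=
    fun j => s(Sum.inl ((j : ℕ) : ZMod n), Sum.inr ((j : ℕ) : ZMod n)) with hf2
  set f3 : ℕ → Sym2 (ZMod n ⊕ ZMod n) :=
    fun m => s(Sum.inr ((m : ℕ) : ZMod n), Sum.inr ((m + k : ℕ) : ZMod n)) with hf3
  set f4 : ℕ → Sym2 (ZMod n ⊕ ZMod n) :=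
    fun m => s(Sum.inr ((n - k + m : ℕ) : ZMod n), Sum.inr ((m : ℕ) : ZMod n)) with hf4
  have hFset : Fset n k i = ({e1, e2} ∪ (Finset.Icc (i + 1) (n - k)).image f2
      ∪ (Finset.Icc 1 i).image f3 ∪ (Finset.Icc 1 i).image f4) := rfl
  have hnk : ∀ m' : ℕ, 1 ≤ m' → m' ≤ k →
      (n - k + m') % n = n - k + m' ∨ ((n - k + m') % n = 0 ∧ m' = k) := by
    intro m' h1 h2
    rcases Nat.lt_or_ge m' k with h | h
    · exact Or.inl (Nat.mod_eq_of_lt (by omega))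
    · exact Or.inr ⟨by rw [show n - k + m' = n by omega, Nat.mod_self], by omega⟩
  -- disjointness of the "structural" kinds
  have d1 : Disjoint ({e1, e2} ∪ (Finset.Icc (i + 1) (n - k)).image f2
      ∪ (Finset.Icc 1 i).image f3) ((Finset.Icc 1 i).image f4) := by
    rw [Finset.disjoint_left]
    rintro e he he4
    simp only [Finset.mem_image, Finset.mem_Icc] at he4
    obtain ⟨m, hm, rfl⟩ := he4
    simp only [Finset.mem_union, Finset.mem_insert, Finset.mem_singleton, Finset.mem_image,
      Finset.mem_Icc, hf4, he1, he2, hf2, hf3] at he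
    rcases he with ((h | h) | ⟨j, hj, h⟩) | ⟨m', hm', h⟩
    · simp [Sym2.eq_iff] at h
    · simp [Sym2.eq_iff] at h
    · simp [Sym2.eq_iff] at h
    · -- f3 m' = f4 m
      rw [Sym2.eq_iff] at h
      simp only [Sum.inr.injEq] at h
      rcases h with ⟨ha, hb⟩ | ⟨ha, hb⟩
      · rw [cast_eq_cast_iff, Nat.mod_eq_of_lt (by omega)] at ha
        rcases hnk m hm.1 (by omega) with hc | ⟨hc, hc2⟩ <;> rw [hc] at ha <;> omega
      · rw [cast_eq_cast_iff, Nat.mod_eq_of_lt (by omega), Nat.mod_eq_of_lt (by omega)] at ha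
        rw [cast_eq_cast_iff, Nat.mod_eq_of_lt (by omega)] at hb
        rcases hnk m hm.1 (by omega) with hc | ⟨hc, hc2⟩ <;> rw [hc] at hb <;> omega
  have d2 : Disjoint ({e1, e2} ∪ (Finset.Icc (i + 1) (n - k)).image f2)
      ((Finset.Icc 1 i).image f3) := by
    rw [Finset.disjoint_left]
    rintro e he he3
    simp only [Finset.mem_image, Finset.mem_Icc] at he3
    obtain ⟨m, hm, rfl⟩ := he3
    simp only [Finset.mem_union, Finset.mem_insert, Finset.mem_singleton, Finset.mem_image,
      Finset.mem_Icc, he1, he2, hf2, hf3] at he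
    rcases he with (h | h) | ⟨j, hj, h⟩ <;> simp [Sym2.eq_iff] at h
  have d3 : Disjoint ({e1, e2} : Finset (Sym2 (ZMod n ⊕ ZMod n)))
      ((Finset.Icc (i + 1) (n - k)).image f2) := by
    rw [Finset.disjoint_left]
    rintro e he he2'
    simp only [Finset.mem_image, Finset.mem_Icc] at he2'
    obtain ⟨j, hj, rfl⟩ := he2'
    simp only [Finset.mem_insert, Finset.mem_singleton, he1, he2, hf2] at he
    rcases he with h | h <;> simp [Sym2.eq_iff] at h
  have c1 : ({e1, e2} : Finset (Sym2 (ZMod n ⊕ ZMod n))).card = 2 := by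
    rw [Finset.card_pair]
    intro h
    rw [he1, he2, Sym2.eq_iff] at h
    simp only [Sum.inl.injEq] at h
    rcases h with ⟨ha, -⟩ | ⟨ha, -⟩ <;>
      rw [cast_eq_cast_iff, Nat.mod_eq_of_lt (by omega), Nat.mod_eq_of_lt (by omega)] at ha <;>
      omega
  have c2 : ((Finset.Icc (i + 1) (n - k)).image f2).card = n - k - i := by
    rw [Finset.card_image_of_injOn, Nat.card_Icc]
    · omega
    · intro j hj j' hj' h
      simp only [Finset.coe_Icc, Set.mem_Icc] at hj hj'
      rw [hf2, Sym2.eq_iff] at h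
      simp only [Sum.inl.injEq, Sum.inr.injEq] at h
      rcases h with ⟨ha, -⟩ | ⟨ha, -⟩
      · rwa [cast_eq_cast_iff, Nat.mod_eq_of_lt (by omega), Nat.mod_eq_of_lt (by omega)] at ha
      · simp at ha
  have c3 : ((Finset.Icc 1 i).image f3).card = i := by
    rw [Finset.card_image_of_injOn, Nat.card_Icc]
    · omega
    · intro m hm m' hm' h
      simp only [Finset.coe_Icc, Set.mem_Icc] at hm hm'
      rw [hf3, Sym2.eq_iff] at h
      simp only [Sum.inr.injEq] at h
      rcases h with ⟨ha, -⟩ | ⟨ha, hb⟩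
      · rwa [cast_eq_cast_iff, Nat.mod_eq_of_lt (by omega), Nat.mod_eq_of_lt (by omega)] at ha
      · rw [cast_eq_cast_iff, Nat.mod_eq_of_lt (by omega), Nat.mod_eq_of_lt (by omega)] at ha
        omega
  have c4 : ((Finset.Icc 1 i).image f4).card = i := by
    rw [Finset.card_image_of_injOn, Nat.card_Icc]
    · omega
    · intro m hm m' hm' h
      simp only [Finset.coe_Icc, Set.mem_Icc] at hm hm'
      rw [hf4, Sym2.eq_iff] at h
      simp only [Sum.inr.injEq] at h
      rcases h with ⟨-, hb⟩ | ⟨ha, hb⟩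
      · rwa [cast_eq_cast_iff, Nat.mod_eq_of_lt (by omega), Nat.mod_eq_of_lt (by omega)] at hb
      · rw [cast_eq_cast_iff, Nat.mod_eq_of_lt (show m' < n by omega)] at ha
        rcases hnk m hm.1 (by omega) with hc | ⟨hc, hc2⟩ <;> rw [hc] at ha <;> omega
  rw [hFset, Finset.card_union_of_disjoint d1, Finset.card_union_of_disjoint d2,
    Finset.card_union_of_disjoint d3, c1, c2, c3, c4]
  omega

end Petersen4

section Petersen5
open Sum
variable {n k i : ℕ}

lemma induce_adj_of {s : Set (ZMod n ⊕ ZMod n)} {u v : ZMod n ⊕ ZMod n}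
    (hu : u ∈ s) (hv : v ∈ s) (h : (GPetersen n k).Adj u v) :
    ((GPetersen n k).induce s).Adj ⟨u, hu⟩ ⟨v, hv⟩ := by
  simpa [SimpleGraph.comap_adj] using h

lemma inl_mem_A {j : ℕ} (h1 : 1 ≤ j) (h2 : j ≤ n - k) :
    Sum.inl ((j : ℕ) : ZMod n) ∈ Aset n k i := Or.inl ⟨_, ⟨j, h1, h2, rfl⟩, rfl⟩

lemma inr_mem_A {m : ℕ} (h1 : 1 ≤ m) (h2 : m ≤ i) :
    Sum.inr ((m : ℕ) : ZMod n) ∈ Aset n k i := Or.inr ⟨_, ⟨m, h1, h2, rfl⟩, rfl⟩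

lemma adj_outer' (hn : 3 ≤ n) (j : ℕ) :
    (GPetersen n k).Adj (Sum.inl ((j : ℕ) : ZMod n)) (Sum.inl ((j + 1 : ℕ) : ZMod n)) := by
  have hc : ((j : ℕ) : ZMod n) + 1 = ((j + 1 : ℕ) : ZMod n) := by push_cast; ring
  have := adj_outer (k := k) hn ((j : ℕ) : ZMod n)
  rwa [hc] at this

lemma adj_inner' (hn : 3 ≤ n) (hk1 : 1 ≤ k) (hk2 : 2 * k < n) (m : ℕ) :
    (GPetersen n k).Adj (Sum.inr ((m : ℕ) : ZMod n)) (Sum.inr ((m + k : ℕ) : ZMod n)) := by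
  have hc : ((m : ℕ) : ZMod n) + ((k : ℕ) : ZMod n) = ((m + k : ℕ) : ZMod n) := by
    push_cast; ring
  have := adj_inner hn hk1 hk2 ((m : ℕ) : ZMod n)
  rwa [hc] at this

lemma connA (hn : 3 ≤ n) (hk1 : 1 ≤ k) (hk2 : 2 * k < n) (hi1 : 1 ≤ i) (hi2 : i ≤ k) :
    ((GPetersen n k).induce (Aset n k i)).Connected := by
  have hub : Sum.inl ((1 : ℕ) : ZMod n) ∈ Aset n k i := inl_mem_A le_rfl (by omega)
  have reachO : ∀ j : ℕ, 1 ≤ j → j ≤ n - k →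
      ∀ hmem : Sum.inl ((j : ℕ) : ZMod n) ∈ Aset n k i,
      ((GPetersen n k).induce (Aset n k i)).Reachable ⟨_, hmem⟩ ⟨_, hub⟩ := by
    intro j
    induction j with
    | zero => omega
    | succ j ih =>
      intro h1 h2 hmem
      rcases Nat.eq_zero_or_pos j with rfl | hj
      · exact Reachable.refl _
      · have hmem' : Sum.inl ((j : ℕ) : ZMod n) ∈ Aset n k i := inl_mem_A hj (by omega)
        have hadj := induce_adj_of (k := k) hmem' hmem (adj_outer' (k := k) hn j)
        exact hadj.symm.reachable.trans (ih hj (by omega) hmem')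
  have key : ∀ u : (Aset n k i),
      ((GPetersen n k).induce (Aset n k i)).Reachable u ⟨_, hub⟩ := by
    rintro ⟨u, hu⟩
    rcases hu with ⟨v, ⟨j, h1, h2, rfl⟩, rfl⟩ | ⟨v, ⟨m, h1, h2, rfl⟩, rfl⟩
    · exact reachO j h1 h2 _
    · have hmem' : Sum.inl ((m : ℕ) : ZMod n) ∈ Aset n k i := inl_mem_A h1 (by omega)
      have hadj := induce_adj_of (k := k) hmem' (inr_mem_A h1 h2) (adj_spoke _)
      exact hadj.symm.reachable.trans (reachO m h1 (by omega) _)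
  rw [connected_iff]
  exact ⟨fun u v => (key u).trans (key v).symm, ⟨⟨_, hub⟩⟩⟩

lemma connB (hn : 3 ≤ n) (hk1 : 1 ≤ k) (hk2 : 2 * k < n) (hi1 : 1 ≤ i) (hi2 : i ≤ k) :
    ((GPetersen n k).induce ((Aset n k i)ᶜ)).Connected := by
  have hub0 : Sum.inl ((0 : ℕ) : ZMod n) ∈ (Aset n k i)ᶜ := by
    rw [Set.mem_compl_iff, mem_A_inl hn hk1, Nat.mod_eq_of_lt (by omega)]; omega
  have reachBO : ∀ t j : ℕ, n - k + 1 ≤ j → j + t = n →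
      ∀ hmem : Sum.inl ((j : ℕ) : ZMod n) ∈ (Aset n k i)ᶜ,
      ((GPetersen n k).induce ((Aset n k i)ᶜ)).Reachable ⟨_, hmem⟩ ⟨_, hub0⟩ := by
    intro t
    induction t with
    | zero =>
      intro j h1 h2 hmem
      have hv : (⟨Sum.inl ((j : ℕ) : ZMod n), hmem⟩ : ((Aset n k i)ᶜ : Set _))
          = ⟨Sum.inl ((0 : ℕ) : ZMod n), hub0⟩ := by
        apply Subtype.ext
        show Sum.inl ((j : ℕ) : ZMod n) = Sum.inl ((0 : ℕ) : ZMod n)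
        congr 1
        rw [cast_eq_cast_iff, show j = n by omega, Nat.mod_self, Nat.zero_mod]
      rw [hv]
    | succ t ih =>
      intro j h1 h2 hmem
      have hmem' : Sum.inl ((j + 1 : ℕ) : ZMod n) ∈ (Aset n k i)ᶜ := by
        rw [Set.mem_compl_iff, mem_A_inl hn hk1]
        rcases Nat.lt_or_ge (j + 1) n with h | h
        · rw [Nat.mod_eq_of_lt h]; omega
        · rw [show j + 1 = n by omega, Nat.mod_self]; omega
      have hadj := induce_adj_of (k := k) hmem hmem' (adj_outer' (k := k) hn j)
      exact hadj.reachable.trans (ih (j + 1) (by omega) (by omega) hmem')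
  have reachBI : ∀ t m : ℕ, i + 1 ≤ m → m + t = n →
      ∀ hmem : Sum.inr ((m : ℕ) : ZMod n) ∈ (Aset n k i)ᶜ,
      ((GPetersen n k).induce ((Aset n k i)ᶜ)).Reachable ⟨_, hmem⟩ ⟨_, hub0⟩ := by
    intro t
    induction t using Nat.strong_induction_on with
    | _ t ih =>
      intro m h1 h2 hmem
      rcases Nat.lt_or_ge m (n - k + 1) with h | h
      · have h3 : m + k ≤ n := by omega
        have hmem' : Sum.inr ((m + k : ℕ) : ZMod n) ∈ (Aset n k i)ᶜ := by
          rw [Set.mem_compl_iff, mem_A_inr hn hk1 hk2 hi2]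
          rcases Nat.lt_or_ge (m + k) n with hh | hh
          · rw [Nat.mod_eq_of_lt hh]; omega
          · rw [show m + k = n by omega, Nat.mod_self]; omega
        have hadj := induce_adj_of (k := k) hmem hmem' (adj_inner' hn hk1 hk2 m)
        exact hadj.reachable.trans (ih (t - k) (by omega) (m + k) (by omega) (by omega) hmem')
      · have hmm : Sum.inl ((m : ℕ) : ZMod n) ∈ (Aset n k i)ᶜ := by
          rw [Set.mem_compl_iff, mem_A_inl hn hk1]
          rcases Nat.lt_or_ge m n with hh | hh
          · rw [Nat.mod_eq_of_lt hh]; omega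
          · rw [show m = n by omega, Nat.mod_self]; omega
        have hadj := induce_adj_of (k := k) hmm hmem (adj_spoke ((m : ℕ) : ZMod n))
        exact hadj.symm.reachable.trans (reachBO (n - m) m h (by omega) hmm)
  have key : ∀ u : ((Aset n k i)ᶜ : Set _),
      ((GPetersen n k).induce ((Aset n k i)ᶜ)).Reachable u ⟨_, hub0⟩ := by
    rintro ⟨u, hu⟩
    rcases u with v | v
    · obtain ⟨m, hm, rfl⟩ := exists_nat_rep hn v
      have hu' := hu
      rw [Set.mem_compl_iff, mem_A_inl hn hk1, Nat.mod_eq_of_lt hm] at hu'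
      rcases (show m = 0 ∨ n - k + 1 ≤ m by omega) with rfl | h
      · exact Reachable.refl _
      · exact reachBO (n - m) m h (by omega) hu
    · obtain ⟨m, hm, rfl⟩ := exists_nat_rep hn v
      have hu' := hu
      rw [Set.mem_compl_iff, mem_A_inr hn hk1 hk2 hi2, Nat.mod_eq_of_lt hm] at hu'
      rcases (show m = 0 ∨ i + 1 ≤ m by omega) with rfl | h
      · have hmemn : Sum.inr ((n : ℕ) : ZMod n) ∈ (Aset n k i)ᶜ := by
          rw [Set.mem_compl_iff, mem_A_inr hn hk1 hk2 hi2, Nat.mod_self]; omega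
        have hv : (⟨Sum.inr ((0 : ℕ) : ZMod n), hu⟩ : ((Aset n k i)ᶜ : Set _))
            = ⟨Sum.inr ((n : ℕ) : ZMod n), hmemn⟩ := by
          apply Subtype.ext
          show Sum.inr ((0 : ℕ) : ZMod n) = Sum.inr ((n : ℕ) : ZMod n)
          congr 1
          rw [cast_eq_cast_iff, Nat.mod_self, Nat.zero_mod]
        rw [hv]
        exact reachBI 0 n (by omega) (by omega) hmemn
      · exact reachBI (n - m) m h (by omega) hu
  rw [connected_iff]
  exact ⟨fun u v => (key u).trans (key v).symm, ⟨⟨_, hub0⟩⟩⟩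

end Petersen5

/-- for `1 ≤ i ≤ k`, with `A = {x₁, …, x_{n-k}, y₁, …, y_i}`, the cross edges
`[A, B]` form a bond of `P(n,k)` of size `n - k + i + 2`. -/
theorem gPetersen_bond_large (n k i : ℕ) (hn : 3 ≤ n) (hk1 : 1 ≤ k)
    (hk2 : 2 * k < n) (hi1 : 1 ≤ i) (hi2 : i ≤ k) :
    IsBond (GPetersen n k)
        (crossEdges (GPetersen n k)
          ((Sum.inl '' {v : ZMod n | ∃ j : ℕ, 1 ≤ j ∧ j ≤ n - k ∧ v = (j : ZMod n)}) ∪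
           (Sum.inr '' {v : ZMod n | ∃ j : ℕ, 1 ≤ j ∧ j ≤ i ∧ v = (j : ZMod n)}))) ∧
      (crossEdges (GPetersen n k)
          ((Sum.inl '' {v : ZMod n | ∃ j : ℕ, 1 ≤ j ∧ j ≤ n - k ∧ v = (j : ZMod n)}) ∪
           (Sum.inr '' {v : ZMod n | ∃ j : ℕ, 1 ≤ j ∧ j ≤ i ∧ v = (j : ZMod n)}))).ncard
        = n - k + i + 2 := by
  have hset : ((Sum.inl '' {v : ZMod n | ∃ j : ℕ, 1 ≤ j ∧ j ≤ n - k ∧ v = (j : ZMod n)}) ∪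
      (Sum.inr '' {v : ZMod n | ∃ j : ℕ, 1 ≤ j ∧ j ≤ i ∧ v = (j : ZMod n)})) = Aset n k i := rfl
  rw [hset]
  have hcr := cross_eq hn hk1 hk2 hi1 hi2
  have hcard := card_F hn hk1 hk2 hi1 hi2
  constructor
  · refine isBond_crossEdges (connA hn hk1 hk2 hi1 hi2) (connB hn hk1 hk2 hi1 hi2) ?_
    rw [hcr]
    refine ⟨s(Sum.inl ((n - k : ℕ) : ZMod n), Sum.inl ((n - k + 1 : ℕ) : ZMod n)), ?_⟩
    rw [Finset.mem_coe, mem_F]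
    exact Or.inl rfl
  · rw [hcr, Set.ncard_coe_finset, hcard]
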